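/- Let k > 0. There is no differentiable function λ : ℝ → ℝ satisfying λ'(t) + λ(t)² + k = 0 for all t ∈ [0, π/√k]. -/

import Mathlib

open Real

/-- For `k > 0`, there is no differentiable function `λ : ℝ → ℝ` satisfying the scalar
Riccati equation `λ'(t) + λ(t)² + k = 0` for all `t ∈ [0, π/√k]`. -/
theorem stmt_14 (k : ℝ) (hk : 0 < k) :
    ¬ ∃ lam lam' : ℝ → ℝ,
      (∀ t ∈ Set.Icc (0 : ℝ) (π / Real.sqrt k), HasDerivAt lam (lam' t) t) ∧
      (∀ t ∈ Set.Icc (0 : ℝ) (π / Real.sqrt k), lam' t + lam t ^ 2 + k = 0) := by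
  rintro ⟨lam, lam', hderiv, heq⟩
  set s : ℝ := Real.sqrt k with hs
  have hs0 : 0 < s := Real.sqrt_pos.mpr hk
  have hs2 : s ^ 2 = k := Real.sq_sqrt hk.le
  set L : ℝ := π / s with hL
  have hL0 : 0 < L := div_pos Real.pi_pos hs0
  set θ : ℝ → ℝ := fun t => Real.arctan (lam t / s) with hθ
  have hθderiv : ∀ t ∈ Set.Icc (0 : ℝ) L, HasDerivAt θ (-s) t := by
    intro t ht
    have h1 : HasDerivAt (fun t => lam t / s) (lam' t / s) t := (hderiv t ht).div_const s
    have h2 := (Real.hasDerivAt_arctan (lam t / s)).comp t h1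
    refine h2.congr_deriv ?_
    have h3 : lam' t = -(lam t ^ 2 + k) := by linarith [heq t ht]
    have hpos : 0 < k + lam t ^ 2 := by positivity
    rw [h3]
    field_simp
    ring_nf
    nlinarith [hs2]
  have hcont : ContinuousOn θ (Set.Icc 0 L) := fun t ht =>
    ((hθderiv t ht).continuousAt).continuousWithinAt
  obtain ⟨c, hc, hcs⟩ := exists_hasDerivAt_eq_slope θ (fun _ => -s) hL0 hcont
    (fun x hx => hθderiv x (Set.mem_Icc_of_Ioo hx))
  have hsL : s * L = π := by
    rw [hL]; field_simp
  have hkey : θ L - θ 0 = -π := by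
    have : -s = (θ L - θ 0) / (L - 0) := hcs
    rw [sub_zero, eq_div_iff hL0.ne'] at this
    nlinarith [hsL]
  have h1 : θ L > -(π / 2) := Real.neg_pi_div_two_lt_arctan _
  have h2 : θ 0 < π / 2 := Real.arctan_lt_pi_div_two _
  linarith
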